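/- If X is a subspace of the polynomials of degree at most m on a nondegenerate interval [a,b] and X admits a positive basis, then dim X ≤ ⌊(m+3)/2⌋; moreover this bound is attained: there exists such an X with a positive basis and dim X = ⌊(m+3)/2⌋. -/

import Mathlib

open Polynomial Set Finset Filter Topology

section PosBasisAux


/-- If `0 ≤ f ≤ g` on `[a,b]` then at any point of `[a,b]`,
the root multiplicity of `g` is at most that of `f` (for `f ≠ 0`). -/
lemma rootMult_le_of_le {a b : ℝ} (hab : a < b) {f g : Polynomial ℝ} (hf : f ≠ 0)
    (h0 : ∀ x ∈ Set.Icc a b, 0 ≤ f.eval x) (hfg : ∀ x ∈ Set.Icc a b, f.eval x ≤ g.eval x)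
    {t : ℝ} (ht : t ∈ Set.Icc a b) :
    g.rootMultiplicity t ≤ f.rootMultiplicity t := by
  by_cases hg : g = 0
  · simp [hg, rootMultiplicity_zero]
  by_contra hlt
  push_neg at hlt
  set kf := f.rootMultiplicity t with hkf
  set kg := g.rootMultiplicity t with hkg
  set f1 := f /ₘ (X - C t) ^ kf with hf1
  set g1 := g /ₘ (X - C t) ^ kg with hg1
  have hf1t : f1.eval t ≠ 0 := eval_divByMonic_pow_rootMultiplicity_ne_zero t hf
  have hfe : (X - C t) ^ kf * f1 = f := pow_mul_divByMonic_rootMultiplicity_eq f t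
  have hge : (X - C t) ^ kg * g1 = g := pow_mul_divByMonic_rootMultiplicity_eq g t
  -- pointwise inequality for x ≠ t in [a,b]
  have key : ∀ x ∈ Set.Icc a b, x ≠ t →
      |f1.eval x| ≤ |g1.eval x| * |x - t| ^ (kg - kf) := by
    intro x hx hxt
    have h1 : |f.eval x| ≤ |g.eval x| := by
      rw [abs_of_nonneg (h0 x hx), abs_of_nonneg ((h0 x hx).trans (hfg x hx))]
      exact hfg x hx
    have hfx : f.eval x = (x - t) ^ kf * f1.eval x := by
      rw [← hfe]; simp
    have hgx : g.eval x = (x - t) ^ kg * g1.eval x := by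
      rw [← hge]; simp
    rw [hfx, hgx, abs_mul, abs_mul, abs_pow, abs_pow] at h1
    have hpos : (0:ℝ) < |x - t| ^ kf := by
      apply pow_pos; rw [abs_pos]; exact sub_ne_zero_of_ne hxt
    have : |x - t| ^ kf * |f1.eval x| ≤ |x - t| ^ kf * (|x - t| ^ (kg - kf) * |g1.eval x|) := by
      calc |x - t| ^ kf * |f1.eval x| ≤ |x - t| ^ kg * |g1.eval x| := h1
        _ = |x - t| ^ kf * (|x - t| ^ (kg - kf) * |g1.eval x|) := by
            rw [← mul_assoc, ← pow_add]; congr 2; omega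
    have := le_of_mul_le_mul_left this hpos
    linarith [this, abs_nonneg (g1.eval x), abs_nonneg (x - t),
      mul_comm (|x - t| ^ (kg - kf)) (|g1.eval x|)]
  -- choose a one-sided filter
  obtain ⟨s, hsub, hne⟩ : ∃ s : Set ℝ, (s ⊆ Set.Icc a b ∧ t ∉ s) ∧ (𝓝[s] t).NeBot := by
    rcases lt_or_ge t b with h | h
    · refine ⟨Set.Ioo t b, ⟨fun x hx => ⟨le_trans ht.1 hx.1.le, hx.2.le⟩, by simp⟩, ?_⟩
      rw [← mem_closure_iff_nhdsWithin_neBot, closure_Ioo (ne_of_lt h)]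
      exact ⟨le_refl t, h.le⟩
    · have htb : t = b := le_antisymm ht.2 h
      refine ⟨Set.Ioo a t, ⟨fun x hx => ⟨hx.1.le, hx.2.le.trans ht.2⟩, by simp⟩, ?_⟩
      rw [← mem_closure_iff_nhdsWithin_neBot, closure_Ioo (by rw [htb]; exact ne_of_lt hab)]
      exact ⟨(htb ▸ hab).le, le_refl t⟩
  haveI := hne
  have hlim1 : Tendsto (fun x => |f1.eval x|) (𝓝[s] t) (𝓝 |f1.eval t|) :=
    ((f1.continuous_aeval.abs).tendsto t).mono_left nhdsWithin_le_nhds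
  have hlim2 : Tendsto (fun x => |g1.eval x| * |x - t| ^ (kg - kf)) (𝓝[s] t)
      (𝓝 (|g1.eval t| * |t - t| ^ (kg - kf))) := by
    apply Tendsto.mono_left _ nhdsWithin_le_nhds
    exact (g1.continuous_aeval.abs.mul ((continuous_id.sub continuous_const).abs.pow _)).tendsto t
  have hz : |g1.eval t| * |t - t| ^ (kg - kf) = 0 := by
    rw [sub_self, abs_zero, zero_pow (by omega), mul_zero]
  rw [hz] at hlim2
  have : |f1.eval t| ≤ 0 := by
    refine le_of_tendsto_of_tendsto hlim1 hlim2 ?_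
    filter_upwards [self_mem_nhdsWithin] with x hx
    exact key x (hsub.1 hx) (fun h => hsub.2 (h ▸ hx))
  exact hf1t (abs_eq_zero.mp (le_antisymm this (abs_nonneg _)))



lemma exists_eps {a b : ℝ} (hab : a < b) {q f : Polynomial ℝ} (hq : q ≠ 0) (hf : f ≠ 0)
    (hq0 : ∀ x ∈ Set.Icc a b, 0 ≤ q.eval x)
    (hmult : ∀ t ∈ Set.Icc a b, q.rootMultiplicity t ≤ f.rootMultiplicity t) :
    ∃ ε : ℝ, 0 < ε ∧ ∀ x ∈ Set.Icc a b, ε * f.eval x ≤ q.eval x := by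
  classical
  set s : Multiset ℝ := q.roots.filter (· ∈ Set.Icc a b) with hs
  set u : Polynomial ℝ := (s.map (fun r => X - C r)).prod with hu
  have hcount : ∀ r : ℝ, s.count r = if r ∈ Set.Icc a b then q.rootMultiplicity r else 0 := by
    intro r
    rw [hs, Multiset.count_filter, count_roots]
  have huq : u ∣ q := by
    refine dvd_trans ?_ (prod_multiset_X_sub_C_dvd q)
    exact Multiset.prod_dvd_prod_of_le (Multiset.map_le_map (Multiset.filter_le _ _))
  have huf : u ∣ f := by
    refine dvd_trans ?_ (prod_multiset_X_sub_C_dvd f)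
    apply Multiset.prod_dvd_prod_of_le
    apply Multiset.map_le_map
    rw [Multiset.le_iff_count]
    intro r
    rw [hcount, count_roots]
    split_ifs with h
    · exact hmult r h
    · exact Nat.zero_le _
  obtain ⟨v, hv⟩ := huq
  obtain ⟨w, hw⟩ := huf
  have hvne : ∀ x ∈ Set.Icc a b, v.eval x ≠ 0 := by
    intro x hx hvx
    have hqx : q.IsRoot x := by rw [IsRoot, hv]; simp [hvx]
    have hk : (Multiset.replicate (q.rootMultiplicity x) x) ≤ s := by
      rw [← Multiset.le_count_iff_replicate_le, hcount, if_pos hx]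
    have hdvd1 : (X - C x) ^ (q.rootMultiplicity x) ∣ u := by
      have := Multiset.prod_dvd_prod_of_le (Multiset.map_le_map (f := fun r => X - C r) hk)
      rwa [Multiset.map_replicate, Multiset.prod_replicate] at this
    have hdvd2 : (X - C x) ^ (q.rootMultiplicity x + 1) ∣ q := by
      obtain ⟨u1, hu1⟩ := hdvd1
      obtain ⟨v1, hv1⟩ := dvd_iff_isRoot.mpr hvx
      refine ⟨u1 * v1, ?_⟩
      conv_lhs => rw [hv, hu1, hv1]
      ring
    have := (le_rootMultiplicity_iff hq).mpr hdvd2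
    omega
  -- min of |v| and max of |w| on the compact interval
  have hIcc : IsCompact (Set.Icc a b) := isCompact_Icc
  have hne : (Set.Icc a b).Nonempty := Set.nonempty_Icc.mpr hab.le
  obtain ⟨x0, hx0, hmin⟩ := hIcc.exists_isMinOn hne (v.continuous_aeval.abs.continuousOn)
  obtain ⟨x1, hx1, hmax⟩ := hIcc.exists_isMaxOn hne (w.continuous_aeval.abs.continuousOn)
  set δ := |v.eval x0| with hδ
  set M := |w.eval x1| with hM
  have hδpos : 0 < δ := abs_pos.mpr (hvne x0 hx0)
  have hMnn : 0 ≤ M := abs_nonneg _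
  have hδle : ∀ x ∈ Set.Icc a b, δ ≤ |v.eval x| := fun x hx => hmin hx
  have hMge : ∀ x ∈ Set.Icc a b, |w.eval x| ≤ M := fun x hx => hmax hx
  refine ⟨δ / (M + 1), div_pos hδpos (by linarith), ?_⟩
  set ε := δ / (M + 1) with hε
  have hεM : ε * M < δ := by
    rw [hε, div_mul_eq_mul_div, div_lt_iff₀ (by linarith)]
    nlinarith
  have hεpos : 0 < ε := div_pos hδpos (by linarith)
  -- sign of v is constant on Icc
  intro x hx
  have hax : a ∈ Set.Icc a b := Set.left_mem_Icc.mpr hab.le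
  have key : 0 ≤ u.eval x * (v.eval x - ε * w.eval x) := by
    rcases lt_or_gt_of_ne (hvne a hax) with hva | hva
    · -- v < 0 everywhere
      have hvneg : ∀ y ∈ Set.Icc a b, v.eval y < 0 := by
        intro y hy
        rcases lt_or_gt_of_ne (hvne y hy) with h | h
        · exact h
        · exfalso
          have hsub : Set.Icc a y ⊆ Set.Icc a b := Set.Icc_subset_Icc le_rfl hy.2
          have := intermediate_value_Icc hy.1 (v.continuous_aeval.continuousOn)
          have h0 : (0:ℝ) ∈ Set.Icc (v.eval a) (v.eval y) := ⟨hva.le, h.le⟩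
          obtain ⟨c, hc, hc0⟩ := this h0
          exact hvne c (hsub hc) hc0
      have hu0 : u.eval x ≤ 0 := by
        have hqx := hq0 x hx
        rw [hv, eval_mul] at hqx
        nlinarith [hvneg x hx]
      have : v.eval x - ε * w.eval x < 0 := by
        have h1 : v.eval x ≤ -δ := by
          have h := hδle x hx
          rw [abs_of_neg (hvneg x hx)] at h
          linarith
        have h2 : ε * w.eval x ≥ -(ε * M) := by
          have := hMge x hx
          have := neg_abs_le (w.eval x)
          nlinarith
        linarith
      nlinarith
    · -- v > 0 everywhere
      have hvpos : ∀ y ∈ Set.Icc a b, 0 < v.eval y := by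
        intro y hy
        rcases lt_or_gt_of_ne (hvne y hy) with h | h
        · exfalso
          have hsub : Set.Icc a y ⊆ Set.Icc a b := Set.Icc_subset_Icc le_rfl hy.2
          have := intermediate_value_Icc' hy.1 (v.continuous_aeval.continuousOn)
          have h0 : (0:ℝ) ∈ Set.Icc (v.eval y) (v.eval a) := ⟨h.le, hva.le⟩
          obtain ⟨c, hc, hc0⟩ := this h0
          exact hvne c (hsub hc) hc0
        · exact h
      have hu0 : 0 ≤ u.eval x := by
        have hqx := hq0 x hx
        rw [hv, eval_mul] at hqx
        nlinarith [hvpos x hx]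
      have : 0 < v.eval x - ε * w.eval x := by
        have h1 : δ ≤ v.eval x := by
          have := hδle x hx
          rwa [abs_of_pos (hvpos x hx)] at this
        have h2 : ε * w.eval x ≤ ε * M := by
          have := hMge x hx
          have := le_abs_self (w.eval x)
          nlinarith
        linarith
      nlinarith
  have hqx : q.eval x = u.eval x * v.eval x := by rw [hv, eval_mul]
  have hfx : f.eval x = u.eval x * w.eval x := by rw [hw, eval_mul]
  nlinarith [key, hqx, hfx]

lemma exists_node {a b : ℝ} (hab : a < b) {n : ℕ} (hn : 2 ≤ n) {bb : Fin n → Polynomial ℝ}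
    (hli : LinearIndependent ℝ bb)
    (hiff : ∀ p ∈ Submodule.span ℝ (Set.range bb),
      ((∀ x ∈ Set.Icc a b, 0 ≤ Polynomial.eval x p) ↔
        ∃ c : Fin n → ℝ, (∀ i, 0 ≤ c i) ∧ p = ∑ i, c i • bb i))
    (i : Fin n) :
    ∃ t ∈ Set.Icc a b, ∀ j, j ≠ i → (bb i).rootMultiplicity t < (bb j).rootMultiplicity t := by
  classical
  have hspan : ∀ j, bb j ∈ Submodule.span ℝ (Set.range bb) :=
    fun j => Submodule.subset_span (Set.mem_range_self j)
  have hne0 : ∀ j, bb j ≠ 0 := fun j => hli.ne_zero j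
  -- each bb j is nonnegative on [a,b]
  have hnn : ∀ j, ∀ x ∈ Set.Icc a b, 0 ≤ (bb j).eval x := by
    intro j x hx
    refine ((hiff (bb j) (hspan j)).mpr ⟨Pi.single j 1, ?_, ?_⟩) x hx
    · intro k
      by_cases h : k = j
      · subst h; simp
      · simp [Pi.single_eq_of_ne h]
    · rw [Finset.sum_eq_single j]
      · simp
      · intro k _ hk; simp [Pi.single_apply, hk]
      · simp
  by_contra hcon
  push_neg at hcon
  -- hcon : ∀ t ∈ Icc a b, ∃ j ≠ i, mult (bb j) t ≤ mult (bb i) t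
  set q : Polynomial ℝ := ∑ j ∈ Finset.univ.erase i, bb j with hqdef
  have hq0 : ∀ x ∈ Set.Icc a b, 0 ≤ q.eval x := by
    intro x hx
    rw [hqdef, eval_finset_sum]
    exact Finset.sum_nonneg fun j _ => hnn j x hx
  have hqne : q ≠ 0 := by
    intro h
    set d : Fin n → ℝ := Function.update (fun _ => (1:ℝ)) i 0 with hddef
    have h2 : ∑ j, d j • bb j = 0 := by
      rw [← Finset.add_sum_erase _ _ (Finset.mem_univ i)]
      have e1 : d i = 0 := by rw [hddef, Function.update_self]
      have e2 : ∑ j ∈ Finset.univ.erase i, d j • bb j = q := by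
        rw [hqdef]
        refine Finset.sum_congr rfl fun j hj => ?_
        rw [hddef, Function.update_of_ne (Finset.ne_of_mem_erase hj), one_smul]
      rw [e1, e2, zero_smul, zero_add, h]
    have hall := Fintype.linearIndependent_iff.mp hli _ h2
    haveI : Nontrivial (Fin n) := Fin.nontrivial_iff_two_le.mpr hn
    obtain ⟨j, hj⟩ := exists_ne i
    have := hall j
    rw [hddef, Function.update_of_ne hj] at this
    exact one_ne_zero this
  have hmult : ∀ t ∈ Set.Icc a b, q.rootMultiplicity t ≤ (bb i).rootMultiplicity t := by
    intro t ht
    obtain ⟨j, hji, hle⟩ := hcon t ht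
    refine le_trans ?_ hle
    refine rootMult_le_of_le hab (hne0 j) (hnn j) ?_ ht
    intro x hx
    rw [hqdef, eval_finset_sum]
    rw [← Finset.sum_erase_add _ _ (Finset.mem_erase.mpr ⟨hji, Finset.mem_univ j⟩)]
    have : 0 ≤ ∑ k ∈ (Finset.univ.erase i).erase j, (bb k).eval x :=
      Finset.sum_nonneg fun k _ => hnn k x hx
    linarith
  obtain ⟨ε, hεpos, hεle⟩ := exists_eps hab hqne (hne0 i) hq0 hmult
  set p : Polynomial ℝ := q - ε • bb i with hpdef
  have hpspan : p ∈ Submodule.span ℝ (Set.range bb) := by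
    refine Submodule.sub_mem _ ?_ (Submodule.smul_mem _ _ (hspan i))
    exact Submodule.sum_mem _ fun j _ => hspan j
  have hpnn : ∀ x ∈ Set.Icc a b, 0 ≤ p.eval x := by
    intro x hx
    rw [hpdef]
    simp only [eval_sub, eval_smul, smul_eq_mul]
    linarith [hεle x hx]
  obtain ⟨c, hc, hcp⟩ := (hiff p hpspan).mp hpnn
  set d : Fin n → ℝ := Function.update (fun _ => (1:ℝ)) i (-ε) with hddef
  have hd : p = ∑ j, d j • bb j := by
    rw [← Finset.add_sum_erase _ _ (Finset.mem_univ i)]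
    have e1 : d i = -ε := by rw [hddef, Function.update_self]
    have e2 : ∑ j ∈ Finset.univ.erase i, d j • bb j = q := by
      rw [hqdef]
      refine Finset.sum_congr rfl fun j hj => ?_
      rw [hddef, Function.update_of_ne (Finset.ne_of_mem_erase hj), one_smul]
    rw [e1, e2, hpdef]
    module
  have hzero : ∑ j, (c j - d j) • bb j = 0 := by
    simp only [sub_smul, Finset.sum_sub_distrib]
    rw [← hcp, ← hd, sub_self]
  have hci : c i - d i = 0 := Fintype.linearIndependent_iff.mp hli _ hzero i
  have hdi : d i = -ε := by rw [hddef, Function.update_self]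
  have := hc i
  rw [sub_eq_zero] at hci
  rw [hci, hdi] at this
  linarith


lemma construction {a b : ℝ} (hab : a < b) (m n : ℕ) (hn1 : 1 ≤ n) (hnm : 2 * n ≤ m + 3) :
    ∃ bb : Fin n → Polynomial ℝ, (∀ i, (bb i).natDegree ≤ m) ∧ LinearIndependent ℝ bb ∧
    ∀ p ∈ Submodule.span ℝ (Set.range bb),
      ((∀ x ∈ Set.Icc a b, 0 ≤ Polynomial.eval x p) ↔
        ∃ c : Fin n → ℝ, (∀ i, 0 ≤ c i) ∧ p = ∑ i, c i • bb i) := by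
  classical
  have hba : 0 < b - a := sub_pos.mpr hab
  -- the nodes
  set t : Fin n → ℝ := fun i => a + (b - a) * (i : ℝ) / ((n : ℝ) - 1) with htdef
  have ht0 : ∀ i : Fin n, (i : ℕ) = 0 → t i = a := by
    intro i hi
    simp [htdef, hi]
  have htmono : ∀ i j : Fin n, (i : ℕ) < (j : ℕ) → t i < t j := by
    intro i j hij
    have hn2 : 2 ≤ n := by have := j.isLt; omega
    have hd : (0:ℝ) < (n : ℝ) - 1 := by
      have : (2:ℝ) ≤ (n:ℝ) := by exact_mod_cast hn2
      linarith
    have hcast : ((i:ℕ):ℝ) < ((j:ℕ):ℝ) := by exact_mod_cast hij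
    rw [htdef]
    simp only [add_lt_add_iff_left]
    rw [div_lt_div_iff_of_pos_right hd]
    nlinarith
  have htinj : Function.Injective t := by
    intro i j hij
    rcases lt_trichotomy (i : ℕ) (j : ℕ) with h | h | h
    · exact absurd hij (ne_of_lt (htmono i j h))
    · exact Fin.ext h
    · exact absurd hij.symm (ne_of_lt (htmono j i h))
  have htlast : ∀ i : Fin n, 2 ≤ n → (i : ℕ) = n - 1 → t i = b := by
    intro i hn2 hi
    have hd : ((n : ℝ) - 1) ≠ 0 := by
      have : (2:ℝ) ≤ (n:ℝ) := by exact_mod_cast hn2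
      linarith
    rw [htdef]
    simp only [hi]
    rw [show (((n-1 : ℕ)) : ℝ) = (n : ℝ) - 1 by rw [Nat.cast_sub hn1]; norm_num]
    field_simp
    ring
  have htmem : ∀ i : Fin n, t i ∈ Set.Icc a b := by
    intro i
    constructor
    · rcases Nat.eq_zero_or_pos (i : ℕ) with h | h
      · exact (ht0 i h).ge
      · exact le_of_lt (ht0 ⟨0, by omega⟩ rfl ▸ htmono ⟨0, by omega⟩ i h)
    · by_cases hn2 : 2 ≤ n
      · rcases eq_or_lt_of_le (Nat.le_sub_one_of_lt i.isLt) with h | h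
        · exact (htlast i hn2 h).le
        · have := htmono i ⟨n-1, by omega⟩ h
          rw [htlast ⟨n-1, by omega⟩ hn2 rfl] at this
          exact this.le
      · have hn : n = 1 := by omega
        have h0 : (i : ℕ) = 0 := by have := i.isLt; omega
        rw [ht0 i h0]; exact hab.le
  -- the basis polynomials
  set S : Fin n → Finset (Fin n) :=
    fun i => Finset.univ.filter (fun j => (j:ℕ) ≠ 0 ∧ (j:ℕ) ≠ n - 1 ∧ j ≠ i) with hSdef
  set bb : Fin n → Polynomial ℝ := fun i =>
    (if (i:ℕ) = 0 then 1 else X - C a) * (if (i:ℕ) = n - 1 then 1 else C b - X) *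
      ∏ j ∈ S i, (X - C (t j))^2 with hbbdef
  have heval : ∀ (i : Fin n) (x : ℝ), (bb i).eval x =
      (if (i:ℕ) = 0 then 1 else x - a) * (if (i:ℕ) = n - 1 then 1 else b - x) *
        ∏ j ∈ S i, (x - t j)^2 := by
    intro i x
    rw [hbbdef]
    simp only [eval_mul, eval_prod, eval_pow, eval_sub, eval_X, eval_C, apply_ite (eval x),
      eval_one]
  -- nonnegativity on [a,b]
  have hnnb : ∀ i, ∀ x ∈ Set.Icc a b, 0 ≤ (bb i).eval x := by
    intro i x hx
    rw [heval]
    have h1 : 0 ≤ (if (i:ℕ) = 0 then 1 else x - a) := by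
      split_ifs
      · norm_num
      · linarith [hx.1]
    have h2 : 0 ≤ (if (i:ℕ) = n - 1 then 1 else b - x) := by
      split_ifs
      · norm_num
      · linarith [hx.2]
    have h3 : 0 ≤ ∏ j ∈ S i, (x - t j)^2 := Finset.prod_nonneg fun j _ => sq_nonneg _
    positivity
  -- vanishing at other nodes
  have hval0 : ∀ i j : Fin n, j ≠ i → (bb i).eval (t j) = 0 := by
    intro i j hji
    have hn2 : 2 ≤ n := by
      by_contra h
      exact hji (Fin.ext (by have := i.isLt; have := j.isLt; omega))
    rw [heval]
    by_cases h0 : (j : ℕ) = 0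
    · have hi0 : (i : ℕ) ≠ 0 := fun h => hji (Fin.ext (h0.trans h.symm))
      rw [if_neg hi0, ht0 j h0]
      simp
    · by_cases hl : (j : ℕ) = n - 1
      · have hil : (i : ℕ) ≠ n - 1 := fun h => hji (Fin.ext (hl.trans h.symm))
        rw [if_neg hil, htlast j hn2 hl]
        simp
      · have hjS : j ∈ S i := by
          rw [hSdef]
          simp only [Finset.mem_filter, Finset.mem_univ, true_and]
          exact ⟨h0, hl, hji⟩
        have : ∏ k ∈ S i, (t j - t k)^2 = 0 :=
          Finset.prod_eq_zero hjS (by simp)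
        rw [this, mul_zero]
  -- positivity at own node
  have hvalpos : ∀ i : Fin n, 0 < (bb i).eval (t i) := by
    intro i
    rw [heval]
    have h1 : 0 < (if (i:ℕ) = 0 then 1 else t i - a) := by
      split_ifs with h
      · norm_num
      · have := htmono ⟨0, by omega⟩ i (by simpa using Nat.pos_of_ne_zero h)
        rw [ht0 ⟨0, by omega⟩ rfl] at this
        linarith
    have h2 : 0 < (if (i:ℕ) = n - 1 then 1 else b - t i) := by
      split_ifs with h
      · norm_num
      · have hn2 : 2 ≤ n := by have := i.isLt; omega
        have := htmono i ⟨n-1, by omega⟩ (show (i:ℕ) < n - 1 by have := i.isLt; omega)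
        rw [htlast ⟨n-1, by omega⟩ hn2 rfl] at this
        linarith
    have h3 : 0 < ∏ j ∈ S i, (t i - t j)^2 := by
      refine Finset.prod_pos fun j hj => ?_
      have hji : j ≠ i := by
        rw [hSdef] at hj
        simp only [Finset.mem_filter] at hj
        exact hj.2.2.2
      have hne : t i - t j ≠ 0 := sub_ne_zero_of_ne (fun h => hji (htinj h.symm))
      exact (sq_nonneg _).lt_of_ne (Ne.symm (pow_ne_zero 2 hne))
    positivity
  -- degrees
  have hdeg : ∀ i, (bb i).natDegree ≤ m := by
    intro i
    rw [hbbdef]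
    refine le_trans (natDegree_mul_le) ?_
    have hd1 : ((if (i:ℕ) = 0 then 1 else X - C a) * (if (i:ℕ) = n - 1 then 1 else C b - X)
        : Polynomial ℝ).natDegree ≤
        (if (i:ℕ) = 0 then 0 else 1) + (if (i:ℕ) = n - 1 then 0 else 1) := by
      refine le_trans (natDegree_mul_le) (Nat.add_le_add ?_ ?_)
      · split_ifs
        · simp
        · exact le_of_eq (natDegree_X_sub_C a)
      · split_ifs
        · simp
        · refine le_of_eq ?_
          rw [show (C b - X : Polynomial ℝ) = -(X - C b) by ring, natDegree_neg,
            natDegree_X_sub_C]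
    have hd2 : (∏ j ∈ S i, ((X : Polynomial ℝ) - C (t j))^2).natDegree ≤ 2 * (S i).card := by
      refine le_trans (natDegree_prod_le _ _) ?_
      rw [Finset.card_eq_sum_ones, Finset.mul_sum]
      refine Finset.sum_le_sum fun j _ => ?_
      refine le_trans (natDegree_pow_le) ?_
      rw [natDegree_X_sub_C]
    refine le_trans (Nat.add_le_add hd1 hd2) ?_
    -- card bounds
    by_cases hn2 : 2 ≤ n
    · have hzl : (⟨0, by omega⟩ : Fin n) ≠ ⟨n-1, by omega⟩ := by
        intro h
        have := Fin.mk.injEq 0 (by omega : 0 < n) (n-1) (by omega : n-1 < n) ▸ h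
        omega
      by_cases hi0 : (i:ℕ) = 0
      · have hsub : S i ⊆ Finset.univ \ {⟨0, by omega⟩, ⟨n-1, by omega⟩} := by
          intro j hj
          rw [hSdef] at hj
          simp only [Finset.mem_filter] at hj
          simp only [Finset.mem_sdiff, Finset.mem_univ, true_and, Finset.mem_insert,
            Finset.mem_singleton]
          push_neg
          exact ⟨fun h => hj.2.1 (by rw [h]), fun h => hj.2.2.1 (by rw [h])⟩
        have hcard : (S i).card ≤ n - 2 := by
          refine le_trans (Finset.card_le_card hsub) ?_
          rw [Finset.card_sdiff_of_subset (Finset.subset_univ _), Finset.card_univ, Fintype.card_fin,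
            Finset.card_insert_of_notMem (by simpa using hzl), Finset.card_singleton]
        rw [if_pos hi0]
        split_ifs <;> omega
      · by_cases hil : (i:ℕ) = n - 1
        · have hsub : S i ⊆ Finset.univ \ {⟨0, by omega⟩, ⟨n-1, by omega⟩} := by
            intro j hj
            rw [hSdef] at hj
            simp only [Finset.mem_filter] at hj
            simp only [Finset.mem_sdiff, Finset.mem_univ, true_and, Finset.mem_insert,
              Finset.mem_singleton]
            push_neg
            exact ⟨fun h => hj.2.1 (by rw [h]), fun h => hj.2.2.1 (by rw [h])⟩
          have hcard : (S i).card ≤ n - 2 := by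
            refine le_trans (Finset.card_le_card hsub) ?_
            rw [Finset.card_sdiff_of_subset (Finset.subset_univ _), Finset.card_univ, Fintype.card_fin,
              Finset.card_insert_of_notMem (by simpa using hzl), Finset.card_singleton]
          rw [if_neg hi0, if_pos hil]
          omega
        · -- middle: n ≥ 3
          have hn3 : 3 ≤ n := by have := i.isLt; omega
          have hsub : S i ⊆ Finset.univ \ {⟨0, by omega⟩, ⟨n-1, by omega⟩, i} := by
            intro j hj
            rw [hSdef] at hj
            simp only [Finset.mem_filter] at hj
            simp only [Finset.mem_sdiff, Finset.mem_univ, true_and, Finset.mem_insert,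
              Finset.mem_singleton]
            push_neg
            exact ⟨fun h => hj.2.1 (by rw [h]), fun h => hj.2.2.1 (by rw [h]), hj.2.2.2⟩
          have hcard : (S i).card ≤ n - 3 := by
            refine le_trans (Finset.card_le_card hsub) ?_
            rw [Finset.card_sdiff_of_subset (Finset.subset_univ _), Finset.card_univ, Fintype.card_fin]
            have h1 : (⟨0, by omega⟩ : Fin n) ∉ ({⟨n-1, by omega⟩, i} : Finset (Fin n)) := by
              simp only [Finset.mem_insert, Finset.mem_singleton]
              push_neg
              refine ⟨hzl, fun h => hi0 (by rw [← h])⟩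
            have h2 : (⟨n-1, by omega⟩ : Fin n) ∉ ({i} : Finset (Fin n)) := by
              simp only [Finset.mem_singleton]
              intro h
              exact hil (by rw [← h])
            rw [Finset.card_insert_of_notMem h1, Finset.card_insert_of_notMem h2,
              Finset.card_singleton]
          rw [if_neg hi0, if_neg hil]
          omega
    · -- n = 1
      have hn : n = 1 := by omega
      have hi0 : (i : ℕ) = 0 := by have := i.isLt; omega
      have hScard : (S i).card = 0 := by
        rw [Finset.card_eq_zero, hSdef]
        ext j
        simp only [Finset.mem_filter, Finset.mem_univ, true_and, Finset.notMem_empty,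
          iff_false]
        intro h
        exact h.1 (by have := j.isLt; omega)
      rw [if_pos hi0, if_pos (by omega : (i:ℕ) = n - 1), hScard]
      omega
  -- linear independence
  have hli : LinearIndependent ℝ bb := by
    rw [Fintype.linearIndependent_iff]
    intro g hg k
    have := congrArg (Polynomial.eval (t k)) hg
    rw [eval_finset_sum] at this
    simp only [eval_smul, smul_eq_mul, eval_zero] at this
    rw [Finset.sum_eq_single k (fun j _ hjk => by rw [hval0 j k (Ne.symm hjk), mul_zero]) (by simp)] at this
    exact (mul_eq_zero.mp this).resolve_right (ne_of_gt (hvalpos k))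
  refine ⟨bb, hdeg, hli, ?_⟩
  intro p hp
  rw [Submodule.mem_span_range_iff_exists_fun] at hp
  obtain ⟨c, hc⟩ := hp
  constructor
  · intro hpos
    refine ⟨c, ?_, hc.symm⟩
    intro k
    have hev : p.eval (t k) = c k * (bb k).eval (t k) := by
      rw [← hc, eval_finset_sum]
      simp only [eval_smul, smul_eq_mul]
      exact Finset.sum_eq_single k (fun j _ hjk => by rw [hval0 j k (Ne.symm hjk), mul_zero]) (by simp)
    have h1 := hpos (t k) (htmem k)
    have h2 := hvalpos k
    nlinarith [hev ▸ h1]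
  · rintro ⟨c', hc', rfl⟩
    intro x hx
    rw [eval_finset_sum]
    refine Finset.sum_nonneg fun j _ => ?_
    simp only [eval_smul, smul_eq_mul]
    exact mul_nonneg (hc' j) (hnnb j x hx)


lemma two_le_mult {a b : ℝ} {p : Polynomial ℝ} (hp : p ≠ 0)
    (hnn : ∀ x ∈ Set.Icc a b, 0 ≤ p.eval x) {x : ℝ} (hx : x ∈ Set.Ioo a b)
    (hroot : p.eval x = 0) : 2 ≤ p.rootMultiplicity x := by
  have hmin : IsLocalMin (fun y => p.eval y) x := by
    refine Filter.eventually_of_mem (isOpen_Ioo.mem_nhds hx) fun y hy => ?_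
    show p.eval x ≤ p.eval y
    rw [hroot]
    exact hnn y (Set.Ioo_subset_Icc_self hy)
  have hderiv : (derivative p).eval x = 0 := by
    have := hmin.deriv_eq_zero
    rwa [Polynomial.deriv] at this
  exact (one_lt_rootMultiplicity_iff_isRoot hp).mpr ⟨hroot, hderiv⟩

lemma sum_count_le {T : Finset ℝ} {M : Multiset ℝ} : ∑ x ∈ T, M.count x ≤ Multiset.card M := by
  classical
  calc ∑ x ∈ T, M.count x = ∑ x ∈ T ∩ M.toFinset, M.count x := by
        refine (Finset.sum_subset Finset.inter_subset_left ?_).symm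
        intro x hx hnx
        rw [Multiset.count_eq_zero]
        intro hmem
        exact hnx (Finset.mem_inter.mpr ⟨hx, Multiset.mem_toFinset.mpr hmem⟩)
    _ ≤ ∑ x ∈ M.toFinset, M.count x :=
        Finset.sum_le_sum_of_subset Finset.inter_subset_right
    _ = Multiset.card M := Multiset.toFinset_sum_count_eq M

lemma upper_bound {a b : ℝ} (hab : a < b) {m n : ℕ}
    {bb : Fin n → Polynomial ℝ} (hdeg : ∀ i, (bb i).natDegree ≤ m)
    (hli : LinearIndependent ℝ bb)
    (hiff : ∀ p ∈ Submodule.span ℝ (Set.range bb),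
      ((∀ x ∈ Set.Icc a b, 0 ≤ Polynomial.eval x p) ↔
        ∃ c : Fin n → ℝ, (∀ i, 0 ≤ c i) ∧ p = ∑ i, c i • bb i)) :
    n ≤ (m + 3) / 2 := by
  classical
  rw [Nat.le_div_iff_mul_le (by norm_num : 0 < 2)]
  by_cases hn2 : 2 ≤ n
  swap
  · omega
  have hne0 : ∀ j, bb j ≠ 0 := fun j => hli.ne_zero j
  have hnn : ∀ j, ∀ x ∈ Set.Icc a b, 0 ≤ (bb j).eval x := by
    intro j x hx
    refine ((hiff (bb j) (Submodule.subset_span (Set.mem_range_self j))).mpr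
      ⟨Pi.single j 1, ?_, ?_⟩) x hx
    · intro k
      by_cases h : k = j
      · subst h; simp
      · simp [Pi.single_eq_of_ne h]
    · rw [Finset.sum_eq_single j]
      · simp
      · intro k _ hk; simp [Pi.single_eq_of_ne hk]
      · simp
  choose tt htmem hkey using fun i => exists_node hab hn2 hli hiff i
  have htinj : Function.Injective tt := by
    intro i j hij
    by_contra hne
    have h1 := hkey i j (Ne.symm hne)
    have h2 := hkey j i hne
    rw [hij] at h1
    omega
  -- choose i avoiding a
  obtain ⟨i, hi⟩ : ∃ i : Fin n, ∀ j, j ≠ i → tt j ≠ a := by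
    by_cases hA : ∃ k, tt k = a
    · obtain ⟨k, hk⟩ := hA
      exact ⟨k, fun j hj hja => hj (htinj (hja.trans hk.symm))⟩
    · push_neg at hA
      exact ⟨⟨0, by omega⟩, fun j _ => hA j⟩
  -- per-node multiplicity lower bounds
  have hterm : ∀ j, j ≠ i → (if tt j = b then 1 else 2) ≤ (bb i).rootMultiplicity (tt j) := by
    intro j hj
    have h1 := hkey j i (fun h => hj h.symm)  -- mult (bb j) (tt j) < mult (bb i) (tt j)
    split_ifs with hb
    · omega
    · have hIoo : tt j ∈ Set.Ioo a b := by
        rcases htmem j with ⟨hl, hr⟩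
        exact ⟨lt_of_le_of_ne hl (Ne.symm (hi j hj)), lt_of_le_of_ne hr hb⟩
      have hroot : (bb i).eval (tt j) = 0 := by
        have : 0 < (bb i).rootMultiplicity (tt j) := by omega
        exact (rootMultiplicity_pos (hne0 i)).mp this
      exact two_le_mult (hne0 i) (hnn i) hIoo hroot
  -- sum of multiplicities bounded by degree
  have hsumdeg : ∑ j ∈ Finset.univ.erase i, (bb i).rootMultiplicity (tt j) ≤ m := by
    have e1 : ∑ j ∈ Finset.univ.erase i, (bb i).rootMultiplicity (tt j)
        = ∑ x ∈ (Finset.univ.erase i).image tt, (bb i).roots.count x := by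
      rw [Finset.sum_image (fun x _ y _ h => htinj h)]
      exact Finset.sum_congr rfl fun j _ => (count_roots _).symm
    rw [e1]
    exact le_trans sum_count_le (le_trans (bb i).card_roots' (hdeg i))
  -- lower bound for the sum
  have hsumlow : 2 * (n - 1) - 1 ≤ ∑ j ∈ Finset.univ.erase i, (bb i).rootMultiplicity (tt j) := by
    have hF : ((Finset.univ.erase i).filter (fun j => tt j = b)).card ≤ 1 := by
      refine Finset.card_le_one.mpr fun x hx y hy => ?_
      simp only [Finset.mem_filter] at hx hy
      exact htinj (hx.2.trans hy.2.symm)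
    have hsum2 : ∑ j ∈ Finset.univ.erase i, (if tt j = b then 1 else 2)
        ≤ ∑ j ∈ Finset.univ.erase i, (bb i).rootMultiplicity (tt j) :=
      Finset.sum_le_sum fun j hj => hterm j (Finset.ne_of_mem_erase hj)
    refine le_trans ?_ hsum2
    rw [← Finset.sum_filter_add_sum_filter_not (Finset.univ.erase i) (fun j => tt j = b)]
    have hcard : (Finset.univ.erase i).card = n - 1 := by
      rw [Finset.card_erase_of_mem (Finset.mem_univ i), Finset.card_univ, Fintype.card_fin]
    have h1 : ∑ j ∈ (Finset.univ.erase i).filter (fun j => tt j = b), (if tt j = b then 1 else 2)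
        = ((Finset.univ.erase i).filter (fun j => tt j = b)).card := by
      rw [Finset.sum_congr rfl (fun j hj => if_pos (Finset.mem_filter.mp hj).2)]
      simp
    have h2 : ∑ j ∈ (Finset.univ.erase i).filter (fun j => ¬ tt j = b), (if tt j = b then 1 else 2)
        = 2 * ((Finset.univ.erase i).filter (fun j => ¬ tt j = b)).card := by
      rw [Finset.sum_congr rfl (fun j hj => if_neg (Finset.mem_filter.mp hj).2)]
      simp [mul_comm]
    rw [h1, h2]
    have hsplit := Finset.card_filter_add_card_filter_not
      (s := Finset.univ.erase i) (p := fun j => tt j = b)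
    omega
  omega

end PosBasisAux

/-- `HasPosBasisDim a b m n` : there is an `n`-dimensional subspace of the polynomials of
degree at most `m` on `[a,b]` with a positive basis `bb_1,…,bb_n`: a linearly independent
family such that an element of its span is nonnegative on `[a,b]` iff it is a nonnegative
linear combination of the `bb_i`. -/
def HasPosBasisDim (a b : ℝ) (m n : ℕ) : Prop :=
  ∃ bb : Fin n → Polynomial ℝ,
    (∀ i, (bb i).natDegree ≤ m) ∧ LinearIndependent ℝ bb ∧
    ∀ p ∈ Submodule.span ℝ (Set.range bb),
      ((∀ x ∈ Set.Icc a b, 0 ≤ Polynomial.eval x p) ↔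
        ∃ c : Fin n → ℝ, (∀ i, 0 ≤ c i) ∧ p = ∑ i, c i • bb i)

/-- The maximal dimension of a subspace of `P_m([a,b])` (with `a < b`) possessing a
positive basis is exactly `⌊(m+3)/2⌋`. -/
theorem max_dim_positive_basis_interval (a b : ℝ) (hab : a < b) (m : ℕ) :
    (∀ n, HasPosBasisDim a b m n → n ≤ (m + 3) / 2) ∧
      HasPosBasisDim a b m ((m + 3) / 2) := by
  constructor
  · rintro n ⟨bb, hdeg, hli, hiff⟩
    exact upper_bound hab hdeg hli hiff
  · obtain ⟨bb, h1, h2, h3⟩ := construction hab m ((m + 3) / 2) (by omega) (by omega)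
    exact ⟨bb, h1, h2, h3⟩
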